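/- Let X be a proper geodesic δ-hyperbolic space admitting a cocompact isometric action, with Patterson–Sullivan density {μ_x} on the horoboundary HX of dimension h(X) > 0, and let π: HX → ∂X be the natural Isom(X)-equivariant continuous surjection to the Gromov boundary. Then the pushforward measures π_*μ_p have no atoms, for every p ∈ X. -/

import Mathlib

open MeasureTheory Filter
open scoped ENNReal

/-- The Gromov product of `x` and `y` with respect to the basepoint `o`. -/
noncomputable def gromovProd {X : Type*} [MetricSpace X] (o x y : X) : ℝ :=
  (dist x o + dist y o - dist x y) / 2

/-- On the measurable hull of `s`, any measurable subset disjoint from `s` is null. -/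
lemma hull_null {α : Type*} [MeasurableSpace α] (μ : Measure α) (s : Set α)
    (hfin : μ s ≠ ⊤) :
    ∀ B : Set α, MeasurableSet B → B ⊆ toMeasurable μ s \ s → μ B = 0 := by
  intro B hBm hBsub
  have hBsub' : B ⊆ toMeasurable μ s := fun x hx => (hBsub hx).1
  have hBle : μ B ≤ μ s := by
    calc μ B ≤ μ (toMeasurable μ s) := measure_mono hBsub'
    _ = μ s := measure_toMeasurable s
  have h1 : μ s ≤ μ (toMeasurable μ s \ B) := by
    refine measure_mono fun x hx => ⟨subset_toMeasurable μ s hx, fun hxB => (hBsub hxB).2 hx⟩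
  have h2 : μ (toMeasurable μ s \ B) = μ (toMeasurable μ s) - μ B :=
    measure_diff hBsub' hBm.nullMeasurableSet (lt_of_le_of_lt hBle (lt_top_iff_ne_top.2 hfin)).ne
  rw [h2, measure_toMeasurable] at h1
  have h3 : μ s + μ B ≤ μ s + 0 := by
    rw [add_zero]
    calc μ s + μ B ≤ (μ s - μ B) + μ B := add_le_add h1 le_rfl
    _ = μ s := tsub_add_cancel_of_le hBle
  exact le_antisymm (le_of_le_of_eq ((ENNReal.add_le_add_iff_left hfin).1 h3) rfl) zero_le

/-- Integral over a measurable hull of `s` of a function bounded by `c` on `s` is at most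
the measure. -/
lemma hull_lintegral {α : Type*} [MeasurableSpace α] (μ : Measure α) (s : Set α)
    (hfin : μ s ≠ ⊤) (g : α → ℝ≥0∞) (c : ℝ≥0∞) (hg : ∀ x ∈ s, g x ≤ c) :
    ∫⁻ x in toMeasurable μ s, g x ∂μ ≤ c * μ s := by
  set A := toMeasurable μ s with hAdef
  have hA : MeasurableSet A := measurableSet_toMeasurable μ s
  have hmuA : μ A = μ s := measure_toMeasurable s
  rw [lintegral_def]
  apply iSup₂_le
  intro φ hφ
  rw [← SimpleFunc.lintegral_eq_lintegral]
  set B := A ∩ φ ⁻¹' Set.Ioi c with hBdef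
  have hBm : MeasurableSet B := hA.inter (φ.measurable measurableSet_Ioi)
  have hBsub : B ⊆ A \ s := by
    rintro x ⟨hxA, hxc⟩
    exact ⟨hxA, fun hxs => absurd (le_trans (hφ x) (hg x hxs)) (not_le.2 hxc)⟩
  have hB0 : μ B = 0 := hull_null μ s hfin B hBm hBsub
  have hsplit : (A \ B) ∪ B = A := Set.diff_union_of_subset Set.inter_subset_left
  have hdisj : Disjoint (A \ B) B := Set.disjoint_sdiff_left
  calc ∫⁻ x in A, φ x ∂μ = ∫⁻ x in (A \ B) ∪ B, φ x ∂μ := by rw [hsplit]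
  _ = (∫⁻ x in A \ B, φ x ∂μ) + ∫⁻ x in B, φ x ∂μ := lintegral_union hBm hdisj
  _ = ∫⁻ x in A \ B, φ x ∂μ := by rw [setLIntegral_measure_zero B _ hB0, add_zero]
  _ ≤ ∫⁻ _ in A \ B, c ∂μ := by
      refine setLIntegral_mono measurable_const fun x hx => ?_
      by_contra hcon
      exact hx.2 ⟨hx.1, not_le.1 hcon⟩
  _ = c * μ (A \ B) := setLIntegral_const _ _
  _ ≤ c * μ s := by
      rw [← hmuA]; exact mul_le_mul' le_rfl (measure_mono Set.diff_subset)

/-- Dyadic point on a midpoint chain from `o` towards `y`. -/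
lemma exists_point_on_chain {X : Type*} [MetricSpace X]
    (hgeo : ∀ x y : X, ∃ m : X, dist x m = dist x y / 2 ∧ dist m y = dist x y / 2)
    (o : X) (T : ℝ) (hT : 0 < T) :
    ∀ y : X, T < dist o y → ∃ x : X, T < dist o x ∧ dist o x ≤ 2 * T ∧
      dist o y = dist o x + dist x y := by
  have key : ∀ k : ℕ, ∀ y : X, dist o y ≤ T * 2 ^ k → T < dist o y →
      ∃ x : X, T < dist o x ∧ dist o x ≤ 2 * T ∧ dist o y = dist o x + dist x y := by
    intro k
    induction k with
    | zero => intro y hle hgt; simp only [pow_zero, mul_one] at hle; linarith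
    | succ k ih =>
      intro y hle hgt
      by_cases hcase : dist o y ≤ 2 * T
      · exact ⟨y, hgt, hcase, by simp⟩
      · obtain ⟨m, hm1, hm2⟩ := hgeo o y
        push_neg at hcase
        have h1 : T < dist o m := by rw [hm1]; linarith
        have h2 : dist o m ≤ T * 2 ^ k := by
          rw [hm1]
          have : (2:ℝ) ^ (k+1) = 2 ^ k * 2 := pow_succ 2 k
          nlinarith
        obtain ⟨x, hx1, hx2, hx3⟩ := ih m h2 h1
        refine ⟨x, hx1, hx2, le_antisymm (dist_triangle o x y) ?_⟩
        have h4 : dist x y ≤ dist x m + dist m y := dist_triangle x m y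
        have h5 : dist o y ≤ dist o x + dist x y := dist_triangle o x y
        have h6 : dist o y - dist o x ≤ dist x y := by
          have := abs_dist_sub_le o y x
          rw [dist_comm x y] at *
          have h7 := dist_triangle o y x
          linarith [le_abs_self (dist o y - dist o x), abs_dist_sub_le o y x]
        linarith [h4, hx3, hm1, hm2, h6]
  intro y hgt
  obtain ⟨k, hk⟩ : ∃ k : ℕ, dist o y ≤ T * 2 ^ k := by
    obtain ⟨k, hk⟩ := pow_unbounded_of_one_lt (dist o y / T) (one_lt_two (α := ℝ))
    exact ⟨k, by rw [mul_comm]; exact (div_le_iff₀ hT).1 hk.le⟩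
  exact key k y hk hgt

/-- A horofunction-type limit along a sequence going to infinity is unbounded below. -/
lemma horofn_unbounded_below {X : Type*} [MetricSpace X] [ProperSpace X]
    (hgeo : ∀ x y : X, ∃ m : X, dist x m = dist x y / 2 ∧ dist m y = dist x y / 2)
    (o : X) (B : X → ℝ) (p : ℕ → X)
    (h1 : Tendsto (fun n => dist (p n) o) atTop atTop)
    (h2 : ∀ x : X, Tendsto (fun n => dist (p n) x - dist (p n) o) atTop (nhds (B x))) :
    ∀ T : ℝ, ∃ q : X, B q ≤ -T := by
  intro T₀
  set T := max T₀ 1 with hTdef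
  have hT : 0 < T := lt_of_lt_of_le one_pos (le_max_right _ _)
  suffices h : ∃ q : X, B q ≤ -T by
    obtain ⟨q, hq⟩ := h
    exact ⟨q, le_trans hq (neg_le_neg (le_max_left _ _))⟩
  -- choose dyadic points
  have hchoice : ∀ n : ℕ, ∃ x : X, dist x o ≤ 2 * T ∧
      (T < dist o (p n) → T < dist o x ∧ dist o (p n) = dist o x + dist x (p n)) := by
    intro n
    by_cases hc : T < dist o (p n)
    · obtain ⟨x, hx1, hx2, hx3⟩ := exists_point_on_chain hgeo o T hT (p n) hc
      exact ⟨x, by rw [dist_comm]; exact hx2, fun _ => ⟨hx1, hx3⟩⟩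
    · exact ⟨o, by simp; linarith, fun hcon => absurd hcon hc⟩
  choose x hx1 hx2 using hchoice
  have hxball : ∀ n, x n ∈ Metric.closedBall o (2 * T) := by
    intro n; rw [Metric.mem_closedBall]; exact hx1 n
  obtain ⟨q, hqball, φ, hφmono, hφtend⟩ :=
    (isCompact_closedBall o (2 * T)).tendsto_subseq hxball
  refine ⟨q, ?_⟩
  have hdtend : Tendsto (fun k => dist (x (φ k)) q) atTop (nhds 0) := by
    have := hφtend.dist (tendsto_const_nhds (x := q) (f := atTop (α := ℕ)))
    simpa using this
  have hRHS : Tendsto (fun k => -T + dist (x (φ k)) q) atTop (nhds (-T)) := by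
    have := (tendsto_const_nhds (x := -T) (f := atTop (α := ℕ))).add hdtend
    simpa using this
  have hLHS : Tendsto (fun k => dist (p (φ k)) q - dist (p (φ k)) o) atTop (nhds (B q)) :=
    (h2 q).comp (hφmono.tendsto_atTop)
  have hev : ∀ᶠ k in atTop,
      dist (p (φ k)) q - dist (p (φ k)) o ≤ -T + dist (x (φ k)) q := by
    have hbig : ∀ᶠ n in atTop, T < dist o (p n) := by
      have := h1.eventually_gt_atTop T
      filter_upwards [this] with n hn
      rwa [dist_comm]
    filter_upwards [hφmono.tendsto_atTop.eventually hbig] with k hk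
    obtain ⟨hgt, heq⟩ := hx2 (φ k) hk
    have htri : dist (p (φ k)) q ≤ dist (p (φ k)) (x (φ k)) + dist (x (φ k)) q :=
      dist_triangle _ _ _
    have hco1 : dist (p (φ k)) (x (φ k)) = dist (x (φ k)) (p (φ k)) := dist_comm _ _
    have hco2 : dist (p (φ k)) o = dist o (p (φ k)) := dist_comm _ _
    linarith
  exact le_of_tendsto_of_tendsto hLHS hRHS hev

/-- Let `X` be a proper geodesic `δ`-hyperbolic space admitting a cocompact isometric action
of a group `G`, with Patterson–Sullivan density `μ` of dimension `h > 0` on the horoboundary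
`HB` (whose points `η` are given by normalized horofunctions `b η`, i.e. `1`-Lipschitz limits
of `d(pₙ, ·) − d(pₙ, o)`), and let `π : HB → ∂X` be the natural equivariant projection to the
Gromov boundary — two horofunctions project to the same boundary point exactly when they
differ by a bounded amount.  Then the pushforward measures `π_* (μ p)` have no atoms: every
fiber of `π` has `μ p`-measure zero. -/
theorem pushforward_ps_measure_no_atoms {X HB G : Type*} [MetricSpace X] [ProperSpace X]
    [MeasurableSpace HB] [Group G] [MulAction G X] [MulAction G HB]
    (hiso : ∀ (g : G) (x y : X), dist (g • x) (g • y) = dist x y)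
    (o : X) (δ : ℝ) (hδ : 0 ≤ δ)
    (hhyp : ∀ x y z : X, min (gromovProd o x z) (gromovProd o z y) - δ ≤ gromovProd o x y)
    (hgeo : ∀ x y : X, ∃ m : X, dist x m = dist x y / 2 ∧ dist m y = dist x y / 2)
    (h D : ℝ) (hh : 0 < h) (hD : 0 ≤ D)
    (b : HB → X → ℝ)
    (hblip : ∀ (η : HB) (x y : X), |b η x - b η y| ≤ dist x y)
    (hbo : ∀ η : HB, b η o = 0)
    (hhoro : ∀ η : HB, ∃ p : ℕ → X,
      Tendsto (fun n => dist (p n) o) atTop atTop ∧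
      ∀ x : X, Tendsto (fun n => dist (p n) x - dist (p n) o) atTop (nhds (b η x)))
    (hbG : ∀ (g : G) (η : HB) (x : X), b (g • η) x = b η (g⁻¹ • x) - b η (g⁻¹ • o))
    (μ : X → Measure HB)
    (hRN : ∀ p q : X, μ p = (μ q).withDensity fun η =>
      ENNReal.ofReal (Real.exp (-h * (b η p - b η q))))
    (hprob : IsProbabilityMeasure (μ o))
    (hmeas : ∀ g : G, Measurable fun η : HB => g • η)
    (hequiv : ∀ (g : G) (x : X), μ (g • x) = Measure.map (fun η : HB => g • η) (μ x))
    (hcocompact : ∀ p : X, ∃ g : G, dist p (g • o) ≤ D) :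
    ∀ (p : X) (η₀ : HB), μ p {η : HB | ∃ C : ℝ, ∀ x : X, |b η x - b η₀ x| ≤ C} = 0 := by
  -- Step A: comparison of the measures at different basepoints
  have hcomp : ∀ a a' : X, ∀ s : Set HB,
      μ a s ≤ ENNReal.ofReal (Real.exp (h * dist a a')) * μ a' s := by
    intro a a' s
    have hle : μ a ≤ ENNReal.ofReal (Real.exp (h * dist a a')) • μ a' := by
      rw [hRN a a']
      refine Measure.le_iff.2 fun A hA => ?_
      rw [withDensity_apply _ hA, Measure.smul_apply, smul_eq_mul, ← setLIntegral_const]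
      refine setLIntegral_mono measurable_const fun η _ => ?_
      refine ENNReal.ofReal_le_ofReal (Real.exp_le_exp.2 ?_)
      have h1 := (abs_le.1 (hblip η a a')).1
      nlinarith [hh.le]
    have := Measure.le_iff'.1 hle s
    simpa [Measure.smul_apply, smul_eq_mul] using this
  -- Step B: uniform mass bound
  have hmass : ∀ q : X, μ q Set.univ ≤ ENNReal.ofReal (Real.exp (h * D)) := by
    intro q
    obtain ⟨g, hg⟩ := hcocompact q
    calc μ q Set.univ
        ≤ ENNReal.ofReal (Real.exp (h * dist q (g • o))) * μ (g • o) Set.univ :=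
          hcomp q (g • o) Set.univ
      _ ≤ ENNReal.ofReal (Real.exp (h * D)) * μ (g • o) Set.univ := by
          refine mul_le_mul' (ENNReal.ofReal_le_ofReal (Real.exp_le_exp.2 ?_)) le_rfl
          nlinarith [hh.le, dist_nonneg (x := q) (y := g • o)]
      _ = ENNReal.ofReal (Real.exp (h * D)) := by
          rw [hequiv g o, Measure.map_apply (hmeas g) MeasurableSet.univ]
          simp [measure_univ]
  intro p η₀
  obtain ⟨pseq, hp1, hp2⟩ := hhoro η₀
  have hsmall := horofn_unbounded_below hgeo o (b η₀) pseq hp1 hp2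
  -- each uniform fiber piece is null for μ o
  have hSC : ∀ C : ℕ, μ o {η : HB | ∀ x : X, |b η x - b η₀ x| ≤ (C : ℝ)} = 0 := by
    intro C
    set S := {η : HB | ∀ x : X, |b η x - b η₀ x| ≤ (C : ℝ)} with hSdef
    have key : ∀ k : ℕ, μ o S ≤ ENNReal.ofReal (Real.exp (-h * k)) := by
      intro k
      obtain ⟨q, hq⟩ := hsmall ((C : ℝ) + D + k)
      have hSuniv : μ q S ≤ ENNReal.ofReal (Real.exp (h * D)) :=
        le_trans (measure_mono (Set.subset_univ S)) (hmass q)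
      have hfin : μ q S ≠ ⊤ := (lt_of_le_of_lt hSuniv ENNReal.ofReal_lt_top).ne
      set c := ENNReal.ofReal (Real.exp (h * ((C : ℝ) - ((C : ℝ) + D + k)))) with hcdef
      have hbound : ∀ η ∈ S, ENNReal.ofReal (Real.exp (-h * (b η o - b η q))) ≤ c := by
        intro η hη
        refine ENNReal.ofReal_le_ofReal (Real.exp_le_exp.2 ?_)
        rw [hbo η]
        have h2 := (abs_le.1 (hη q)).2
        have h3 : b η q ≤ (C : ℝ) - ((C : ℝ) + D + k) := by linarith
        have h4 := mul_le_mul_of_nonneg_left h3 hh.le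
        linarith
      calc μ o S ≤ μ o (toMeasurable (μ q) S) := measure_mono (subset_toMeasurable _ _)
        _ = ∫⁻ η in toMeasurable (μ q) S,
              ENNReal.ofReal (Real.exp (-h * (b η o - b η q))) ∂(μ q) := by
            rw [hRN o q]; exact withDensity_apply _ (measurableSet_toMeasurable _ _)
        _ ≤ c * μ q S := hull_lintegral (μ q) S hfin _ c hbound
        _ ≤ c * ENNReal.ofReal (Real.exp (h * D)) := mul_le_mul' le_rfl hSuniv
        _ ≤ ENNReal.ofReal (Real.exp (-h * k)) := by
            rw [hcdef, ← ENNReal.ofReal_mul (Real.exp_nonneg _), ← Real.exp_add]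
            exact ENNReal.ofReal_le_ofReal (Real.exp_le_exp.2 (le_of_eq (by ring)))
    have hlim : Tendsto (fun k : ℕ => ENNReal.ofReal (Real.exp (-h * k))) atTop (nhds 0) := by
      rw [← ENNReal.ofReal_zero]
      refine ENNReal.tendsto_ofReal (Real.tendsto_exp_atBot.comp ?_)
      exact (tendsto_const_mul_atBot_of_neg (neg_neg_of_pos hh)).2 tendsto_natCast_atTop_atTop
    exact le_antisymm (ge_of_tendsto' hlim key) zero_le
  -- conclude
  have hsub : {η : HB | ∃ C : ℝ, ∀ x : X, |b η x - b η₀ x| ≤ C} ⊆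
      ⋃ C : ℕ, {η : HB | ∀ x : X, |b η x - b η₀ x| ≤ (C : ℝ)} := by
    rintro η ⟨C, hC⟩
    exact Set.mem_iUnion.2 ⟨⌈C⌉₊, fun x => (hC x).trans (Nat.le_ceil C)⟩
  refine le_antisymm ?_ zero_le
  calc μ p {η : HB | ∃ C : ℝ, ∀ x : X, |b η x - b η₀ x| ≤ C}
      ≤ μ p (⋃ C : ℕ, {η : HB | ∀ x : X, |b η x - b η₀ x| ≤ (C : ℝ)}) := measure_mono hsub
    _ ≤ ∑' C : ℕ, μ p {η : HB | ∀ x : X, |b η x - b η₀ x| ≤ (C : ℝ)} := measure_iUnion_le _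
    _ ≤ ∑' C : ℕ, ENNReal.ofReal (Real.exp (h * dist p o)) *
          μ o {η : HB | ∀ x : X, |b η x - b η₀ x| ≤ (C : ℝ)} :=
        ENNReal.tsum_le_tsum fun C => hcomp p o _
    _ = 0 := by simp [hSC]
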